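/- For all a, a', b, b', c, c' ∈ (0, 0.1]: (i) each of the pairs □(s_a), □(s_{a'}); □(p_{a,b}), □(p_{a',b'}); □(q_{b,c}), □(q_{b',c'}); and □(t_c), □(t_{c'}) has nonempty intersection; (ii) each of the pairs □(s_a), □(q_{b,c}); □(s_a), □(t_c); and □(p_{a,b}), □(t_c) is disjoint. -/

import Mathlib

noncomputable section

/-- The closed axis-parallel hypercube of side length 1 centered at `p ∈ ℝ⁴`. -/
def cube (p : Fin 4 → ℝ) : Set (Fin 4 → ℝ) :=
  {x | ∀ i, |x i - p i| ≤ 1 / 2}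

/-- Center `s_a = (a, −a, 0, 0)`. -/
def sC (a : ℝ) : Fin 4 → ℝ := ![a, -a, 0, 0]

/-- Center `p_{a,b} = (1+a, 1−a, 0.5+b, 0.5−b)`. -/
def pC (a b : ℝ) : Fin 4 → ℝ := ![1 + a, 1 - a, 0.5 + b, 0.5 - b]

/-- Center `q_{b,c} = (1+c, 1−c, 1.5+b, 1.5−b)`. -/
def qC (b c : ℝ) : Fin 4 → ℝ := ![1 + c, 1 - c, 1.5 + b, 1.5 - b]

/-- Center `t_c = (c, −c, 2, 2)`. -/
def tC (c : ℝ) : Fin 4 → ℝ := ![c, -c, 2, 2]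

theorem stmt4 (a a' b b' c c' : ℝ)
    (ha : a ∈ Set.Ioc (0 : ℝ) 0.1) (ha' : a' ∈ Set.Ioc (0 : ℝ) 0.1)
    (hb : b ∈ Set.Ioc (0 : ℝ) 0.1) (hb' : b' ∈ Set.Ioc (0 : ℝ) 0.1)
    (hc : c ∈ Set.Ioc (0 : ℝ) 0.1) (hc' : c' ∈ Set.Ioc (0 : ℝ) 0.1) :
    ((cube (sC a) ∩ cube (sC a')).Nonempty ∧
     (cube (pC a b) ∩ cube (pC a' b')).Nonempty ∧
     (cube (qC b c) ∩ cube (qC b' c')).Nonempty ∧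
     (cube (tC c) ∩ cube (tC c')).Nonempty) ∧
    (Disjoint (cube (sC a)) (cube (qC b c)) ∧
     Disjoint (cube (sC a)) (cube (tC c)) ∧
     Disjoint (cube (pC a b)) (cube (tC c))) := by
  obtain ⟨ha1, ha2⟩ := ha
  obtain ⟨ha1', ha2'⟩ := ha'
  obtain ⟨hb1, hb2⟩ := hb
  obtain ⟨hb1', hb2'⟩ := hb'
  obtain ⟨hc1, hc2⟩ := hc
  obtain ⟨hc1', hc2'⟩ := hc'
  norm_num at ha2 ha2' hb2 hb2' hc2 hc2'
  have ne : ∀ u v : Fin 4 → ℝ, (∀ i, |u i - v i| ≤ 1) →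
      (cube u ∩ cube v).Nonempty := by
    intro u v h
    refine ⟨fun i => (u i + v i) / 2, fun i => ?_, fun i => ?_⟩ <;>
      · have := h i; rw [abs_le] at this ⊢; constructor <;> linarith [this.1, this.2]
  have dj : ∀ u v : Fin 4 → ℝ, 1 < |u 2 - v 2| → Disjoint (cube u) (cube v) := by
    intro u v h
    rw [Set.disjoint_left]
    intro x hx hx'
    have h2 := hx 2; have h2' := hx' 2
    rw [lt_abs] at h; rw [abs_le] at h2 h2'
    obtain h | h := h <;> linarith [h2.1, h2.2, h2'.1, h2'.2]
  refine ⟨⟨ne _ _ ?_, ne _ _ ?_, ne _ _ ?_, ne _ _ ?_⟩, dj _ _ ?_, dj _ _ ?_, dj _ _ ?_⟩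
  case _ | _ | _ | _ =>
    intro i
    fin_cases i <;> simp [sC, pC, qC, tC] <;> rw [abs_le] <;> constructor <;> linarith
  all_goals
    simp only [sC, pC, qC, tC, Matrix.cons_val_two, Matrix.tail_cons, Matrix.head_cons] <;> norm_num <;> rw [lt_abs] <;>
      first | (left; linarith) | (right; linarith)
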